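/- In the two-player game with payoff matrix (T,L)=(0,0), (T,M)=(0,1), (T,R)=(0.85,0.75), (M,L)=(1,0), (M,M)=(0,0), (M,R)=(0,0), (B,L)=(0.75,0.85), (B,M)=(0,0), (B,R)=(0,0), the joint distribution placing probability 0.5 on (T,R) and 0.5 on (B,L) is a coarse correlated equilibrium, and each player's expected payoff under it equals 0.8. -/
import Mathlib

open Finset

noncomputable def UA : Fin 3 → Fin 3 → ℝ :=
  ![![0, 0, 0.85], ![1, 0, 0], ![0.75, 0, 0]]

noncomputable def UB : Fin 3 → Fin 3 → ℝ :=
  ![![0, 1, 0.75], ![0, 0, 0], ![0.85, 0, 0]]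

/-- The joint distribution placing probability 0.5 on (T,R) and 0.5 on (B,L). -/
noncomputable def qE : Fin 3 → Fin 3 → ℝ := fun a b =>
  if (a, b) = (0, 2) ∨ (a, b) = (2, 0) then 0.5 else 0

/-- `qE` is a coarse correlated equilibrium of the given game, and each player's
expected payoff under it equals 0.8. -/
theorem example_game_efficient_CCE :
    (∀ a' : Fin 3, ∑ a : Fin 3, ∑ b : Fin 3, UA a' b * qE a b ≤
      ∑ a : Fin 3, ∑ b : Fin 3, UA a b * qE a b) ∧
    (∀ b' : Fin 3, ∑ a : Fin 3, ∑ b : Fin 3, UB a b' * qE a b ≤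
      ∑ a : Fin 3, ∑ b : Fin 3, UB a b * qE a b) ∧
    (∑ a : Fin 3, ∑ b : Fin 3, UA a b * qE a b = 0.8) ∧
    (∑ a : Fin 3, ∑ b : Fin 3, UB a b * qE a b = 0.8) := by
  refine ⟨?_, ?_, ?_, ?_⟩
  · intro a'; fin_cases a' <;> simp [UA, qE, Fin.sum_univ_three, Matrix.vecHead, Matrix.vecTail] <;> norm_num
  · intro b'; fin_cases b' <;> simp [UB, qE, Fin.sum_univ_three, Matrix.vecHead, Matrix.vecTail] <;> norm_num
  · simp [UA, qE, Fin.sum_univ_three, Matrix.vecHead, Matrix.vecTail]; norm_num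
  · simp [UB, qE, Fin.sum_univ_three, Matrix.vecHead, Matrix.vecTail]; norm_num
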